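/- Let n be a positive integer, let T be a bounded operator on a complex separable Hilbert space H that is an n-hypercontraction, and let M be a closed subspace of H invariant under T. Suppose there exists a unitary operator U : M → ℓ²(ℕ, ℂ) such that U (T|_M) U* = W_n, where W_n is the backward weighted shift on ℓ²(ℕ, ℂ) defined by W_n e_0 = 0 and W_n e_{i+1} = √((i+1)/(n+i)) e_i for i ≥ 0. Then P_M T|_{M⊥} = 0; that is, M⊥ is also invariant under T, so M reduces T, and T is reducible whenever {0} ≠ M ≠ H. -/

import Mathlib

open ContinuousLinearMap Submodule

noncomputable section

/-- `T` is an `n`-hypercontraction. -/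
def IsHypercontraction {H : Type*} [NormedAddCommGroup H] [InnerProductSpace ℂ H]
    [CompleteSpace H] (T : H →L[ℂ] H) (n : ℕ) : Prop :=
  ∀ k : ℕ, 1 ≤ k → k ≤ n →
    (∑ j ∈ Finset.range (k + 1), ((-1 : ℂ) ^ j * (k.choose j : ℂ)) •
      ((ContinuousLinearMap.adjoint T) ^ j * T ^ j)).IsPositive

local notation "ℓ²" => lp (fun _ : ℕ => ℂ) 2

section Aux


open Polynomial Finset

private lemma alt_sum_shift (m : ℕ) (f : ℕ → ℝ) :
    ∑ j ∈ range (m + 2), (-1:ℝ)^j * ((m+1).choose j) * f j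
      = ∑ j ∈ range (m + 1), (-1:ℝ)^j * (m.choose j) * (f j - f (j+1)) := by
  have h1 : ∑ j ∈ range (m+2), (-1:ℝ)^j * (m.choose j) * f j
      = ∑ j ∈ range (m+1), (-1:ℝ)^j * (m.choose j) * f j := by
    rw [Finset.sum_range_succ, Nat.choose_succ_self]; simp
  have key : (∑ x ∈ range (m+1), (-1:ℝ)^(x+1) * (m.choose (x+1)) * f (x+1))
      + f 0 = ∑ j ∈ range (m+1), (-1:ℝ)^j * (m.choose j) * f j := by
    rw [← h1, Finset.sum_range_succ' (fun j => (-1:ℝ)^j * (m.choose j) * f j) (m+1)]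
    norm_num
  rw [Finset.sum_range_succ' (fun j => (-1:ℝ)^j * ((m+1).choose j) * f j) (m+1)]
  simp only [Nat.choose_succ_succ, Nat.succ_eq_add_one, Nat.cast_add]
  have expand : ∀ x : ℕ, (-1:ℝ)^(x+1) * ((m.choose x : ℝ) + (m.choose (x+1) : ℝ)) * f (x+1)
      = -((-1:ℝ)^x * (m.choose x) * f (x+1)) + (-1:ℝ)^(x+1) * (m.choose (x+1)) * f (x+1) := by
    intro x; ring
  simp only [expand, Finset.sum_add_distrib, Finset.sum_neg_distrib, mul_sub,
    Finset.sum_sub_distrib, pow_zero, one_mul, Nat.choose_zero_right, Nat.cast_one]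
  linarith [key]

private lemma fd (m : ℕ) (hm : 0 < m) (p : Polynomial ℝ) (hp : p.natDegree < m) :
    ∑ j ∈ Finset.range (m + 1), (-1:ℝ)^j * (m.choose j) * p.eval (j : ℝ) = 0 := by
  induction m generalizing p with
  | zero => exact absurd hm (lt_irrefl 0)
  | succ m IH =>
    rcases Nat.eq_zero_or_pos m with hm0 | hm0
    · subst hm0
      have hpc : p = C (p.coeff 0) := p.eq_C_of_natDegree_le_zero (by omega)
      rw [hpc]
      simp [Finset.sum_range_succ]
    · set q := p - p.comp (X + 1) with hqdef
      have heval : ∀ j : ℕ, p.eval (j:ℝ) - p.eval ((j:ℝ)+1) = q.eval (j:ℝ) := by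
        intro j; simp [hqdef, eval_comp]
      have hdeg : q.natDegree < m := by
        rcases Nat.eq_zero_or_pos p.natDegree with h0 | h0
        · have hpc : p = C (p.coeff 0) := p.eq_C_of_natDegree_le_zero (by omega)
          have : q = 0 := by rw [hqdef, hpc]; simp
          rw [this]; simpa using hm0
        · have hp0 : p ≠ 0 := fun h => by simp [h] at h0
          have hX1 : (X + 1 : ℝ[X]).natDegree = 1 := by
            simpa using natDegree_X_add_C (1:ℝ)
          have hcomp0 : (p.comp (X + 1)).natDegree = p.natDegree := by
            rw [natDegree_comp, hX1, mul_one]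
          have hcompne : p.comp (X + 1) ≠ 0 := by
            intro h
            rw [h] at hcomp0; simp at hcomp0; omega
          have hlc : p.leadingCoeff = (p.comp (X + 1)).leadingCoeff := by
            rw [leadingCoeff_comp (by rw [hX1]; norm_num)]
            have : (X + 1 : ℝ[X]).leadingCoeff = 1 := by
              simpa using leadingCoeff_X_add_C (1:ℝ)
            rw [this, one_pow, mul_one]
          have hd : p.degree = (p.comp (X+1)).degree := by
            rw [degree_eq_natDegree hp0, degree_eq_natDegree hcompne, hcomp0]
          have hlt := degree_sub_lt hd hp0 hlc
          rcases eq_or_ne q 0 with hq0 | hq0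
          · rw [hq0]; simpa using hm0
          · have : q.natDegree < p.natDegree := natDegree_lt_natDegree hq0 (by rwa [hqdef])
            omega
      rw [show m + 1 + 1 = m + 2 from rfl, alt_sum_shift m (fun j => p.eval (j:ℝ))]
      have : ∀ j ∈ Finset.range (m+1), (-1:ℝ)^j * (m.choose j) *
          ((fun j : ℕ => p.eval (j:ℝ)) j - (fun j : ℕ => p.eval (j:ℝ)) (j+1))
          = (-1:ℝ)^j * (m.choose j) * q.eval (j:ℝ) := by
        intro j _
        simp only []
        rw [← heval j]
        push_cast
        ring
      rw [Finset.sum_congr rfl this]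
      exact IH hm0 q hdeg

open Polynomial Finset

private noncomputable def nuc (n : ℕ) : ℕ → ℕ → ℝ
  | _, 0 => 1
  | 0, _+1 => 0
  | m+1, j+1 => Real.sqrt (((m:ℝ)+1)/((n:ℝ)+m)) * nuc n m j

private noncomputable def sq2 (n m j : ℕ) : ℝ := (nuc n m j)^2

private lemma nuc_one (n m : ℕ) : nuc n m 0 = 1 := by cases m <;> rfl

private lemma nuc_zero (n : ℕ) : ∀ m j, m < j → nuc n m j = 0 := by
  intro m
  induction m with
  | zero => intro j hj; match j, hj with | j+1, _ => rfl
  | succ m IH =>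
    intro j hj
    match j, hj with
    | j+1, hj =>
      show Real.sqrt _ * nuc n m j = 0
      rw [IH j (by omega), mul_zero]

private lemma sq2_zero (n : ℕ) (m j : ℕ) (h : m < j) : sq2 n m j = 0 := by
  rw [sq2, nuc_zero n m j h]; ring

private lemma sq2_diag (n : ℕ) (hn : 0 < n) (m j : ℕ) :
    sq2 n (m+1) (j+1) = ((m:ℝ)+1)/((n:ℝ)+m) * sq2 n m j := by
  have hnn : (0:ℝ) ≤ ((m:ℝ)+1)/((n:ℝ)+m) := by
    apply div_nonneg <;> positivity
  rw [sq2, sq2, show nuc n (m+1) (j+1) = Real.sqrt (((m:ℝ)+1)/((n:ℝ)+m)) * nuc n m j from rfl,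
    mul_pow, Real.sq_sqrt hnn]

private lemma sq2_rec (n : ℕ) (hn : 0 < n) :
    ∀ j m, j < m → sq2 n m (j+1) * ((n:ℝ)+m-1-j) = sq2 n m j * ((m:ℝ)-j) := by
  intro j
  induction j with
  | zero =>
    intro m hm
    match m, hm with
    | m+1, _ =>
      rw [sq2_diag n hn]
      have h0 : sq2 n (m+1) 0 = 1 := by rw [sq2, nuc_one n (m+1)]; ring
      have h1 : sq2 n m 0 = 1 := by rw [sq2, nuc_one n m]; ring
      rw [h0, h1]
      have hne : ((n:ℝ)+m) ≠ 0 := by positivity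
      push_cast
      rw [show (n:ℝ)+((m:ℝ)+1)-1-0 = (n:ℝ)+(m:ℝ) by ring]
      rw [mul_one, div_mul_cancel₀ _ hne]
      ring
  | succ j IH =>
    intro m hm
    match m, hm with
    | m+1, hm =>
      have hj : j < m := by omega
      rw [sq2_diag n hn, sq2_diag n hn]
      have := IH m hj
      push_cast
      push_cast at this
      have e1 : (n:ℝ) + (m+1) - 1 - (j+1) = (n:ℝ) + m - 1 - j := by ring
      rw [e1]
      calc ((m:ℝ)+1)/((n:ℝ)+m) * sq2 n m (j+1) * ((n:ℝ)+m-1-j)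
          = ((m:ℝ)+1)/((n:ℝ)+m) * (sq2 n m (j+1) * ((n:ℝ)+m-1-j)) := by ring
        _ = ((m:ℝ)+1)/((n:ℝ)+m) * (sq2 n m j * ((m:ℝ)-j)) := by rw [this]
        _ = ((m:ℝ)+1)/((n:ℝ)+m) * sq2 n m j * ((m:ℝ)+1-(j+1)) := by ring

private noncomputable def qpol (n m : ℕ) : Polynomial ℝ :=
  ∏ i ∈ range (m-1), (C ((n:ℝ)+1+i) - X)

private lemma qpol_eval (n m : ℕ) (x : ℝ) :
    (qpol n m).eval x = ∏ i ∈ range (m-1), ((n:ℝ)+1+i-x) := by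
  simp [qpol, eval_prod]

private lemma qpol_deg (n m : ℕ) (hm : 0 < m) : (qpol n m).natDegree < m := by
  have h2 : (qpol n m).natDegree ≤ ∑ i ∈ range (m-1), (C ((n:ℝ)+1+(i:ℝ)) - X).natDegree :=
    natDegree_prod_le _ _
  have h1 : ∀ i:ℕ, (C ((n:ℝ)+1+(i:ℝ)) - X).natDegree = 1 := by
    intro i
    rw [show (C ((n:ℝ)+1+(i:ℝ)) - X) = -(X - C ((n:ℝ)+1+(i:ℝ))) by ring, natDegree_neg,
      natDegree_X_sub_C]
  have h3 : ∑ i ∈ range (m-1), (C ((n:ℝ)+1+(i:ℝ)) - X).natDegree = m - 1 := by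
    rw [Finset.sum_congr rfl fun i _ => h1 i]
    simp
  omega

private lemma prod_shift (m : ℕ) (a : ℝ) :
    (∏ i ∈ range m, (a+1+i)) * a = (∏ i ∈ range m, (a+i)) * (a+m) := by
  induction m with
  | zero => simp
  | succ m IH =>
    rw [prod_range_succ, prod_range_succ]
    push_cast
    push_cast at IH
    linear_combination ((a:ℝ)+m+1) * IH

private lemma qpol_shift (n m : ℕ) (hm : 0 < m) (j : ℕ) :
    (qpol n m).eval (j:ℝ) * ((n:ℝ)-j) = (qpol n m).eval ((j:ℝ)+1) * ((n:ℝ)+m-1-j) := by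
  obtain ⟨m', rfl⟩ : ∃ m', m = m' + 1 := ⟨m-1, by omega⟩
  rw [qpol_eval, qpol_eval]
  simp only [Nat.add_sub_cancel]
  have h1 : ∏ i ∈ range m', ((n:ℝ)+1+i-j) = ∏ i ∈ range m', (((n:ℝ)-j)+1+i) := by
    apply prod_congr rfl; intro i _; ring
  have h2 : ∏ i ∈ range m', ((n:ℝ)+1+(i:ℝ)-((j:ℝ)+1)) = ∏ i ∈ range m', (((n:ℝ)-j)+i) := by
    apply prod_congr rfl; intro i _; ring
  rw [h1, h2]
  have := prod_shift m' ((n:ℝ)-j)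
  rw [this]
  congr 1
  push_cast
  ring

private lemma choose_qpol_zero (n m : ℕ) (hn : 0 < n) (hm : 0 < m) (j : ℕ) (hj : n < j) :
    (m.choose j : ℝ) * (qpol n m).eval (j:ℝ) = 0 := by
  rcases lt_or_ge m j with h | h
  · rw [Nat.choose_eq_zero_of_lt h]; simp
  · -- j ≤ m, n < j : some factor vanishes
    have hz : (qpol n m).eval (j:ℝ) = 0 := by
      rw [qpol_eval]
      apply Finset.prod_eq_zero (i := j - n - 1)
      · simp only [Finset.mem_range]; omega
      · have h5 : ((j - n - 1 : ℕ)) + (n + 1) = j := by omega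
        have h6 := congrArg (Nat.cast (R := ℝ)) h5
        push_cast at h6
        rw [show ((j - n - 1 : ℕ) : ℝ) = (j:ℝ) - n - 1 by linarith]
        ring
    rw [hz, mul_zero]

private lemma bridge (n m : ℕ) (hn : 0 < n) (hm : 0 < m) : ∀ j : ℕ,
    (n.choose j : ℝ) * sq2 n m j * (qpol n m).eval 0 = (m.choose j : ℝ) * (qpol n m).eval (j:ℝ) := by
  intro j
  induction j with
  | zero =>
    have h0 : sq2 n m 0 = 1 := by rw [sq2, nuc_one]; ring
    simp [h0]
  | succ j IH =>
    rcases le_or_gt n j with hjn | hjn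
    · have h0 := choose_qpol_zero n m hn hm (j+1) (by omega)
      rw [Nat.choose_eq_zero_of_lt (show n < j+1 by omega)]
      push_cast at h0 ⊢
      rw [zero_mul, zero_mul]
      exact h0.symm
    · rcases le_or_gt m j with hjm | hjm
      · rw [sq2_zero n m (j+1) (by omega),
          Nat.choose_eq_zero_of_lt (show m < j+1 by omega)]
        simp
      · -- j < n, j < m : the cancellation argument
        have hD : (0:ℝ) < ((n:ℝ)+m-1-j) := by
          have h5 : (j:ℝ)+1 ≤ (m:ℝ) := by exact_mod_cast Nat.succ_le_of_lt hjm
          have hn' : (1:ℝ) ≤ (n:ℝ) := by exact_mod_cast hn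
          linarith
        have hj1 : ((j:ℝ)+1) ≠ 0 := by positivity
        apply mul_right_cancel₀ (mul_ne_zero hj1 hD.ne')
        have key1 : (n.choose (j+1):ℝ) * ((j:ℝ)+1) = (n.choose j:ℝ) * ((n:ℝ)-(j:ℝ)) := by
          have h2 := congrArg (Nat.cast (R := ℝ)) (Nat.choose_succ_right_eq n j)
          push_cast [Nat.cast_sub (le_of_lt hjn)] at h2
          exact h2
        have key2 : (m.choose (j+1):ℝ) * ((j:ℝ)+1) = (m.choose j:ℝ) * ((m:ℝ)-(j:ℝ)) := by
          have h2 := congrArg (Nat.cast (R := ℝ)) (Nat.choose_succ_right_eq m j)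
          push_cast [Nat.cast_sub (le_of_lt hjm)] at h2
          exact h2
        have key3 := sq2_rec n hn j m hjm
        have key4 := qpol_shift n m hm j
        have ej : ((j:ℝ)+1) = (((j+1:ℕ)):ℝ) := by push_cast; ring
        calc (n.choose (j+1):ℝ) * sq2 n m (j+1) * (qpol n m).eval 0 * (((j:ℝ)+1) * ((n:ℝ)+m-1-j))
            = ((n.choose (j+1):ℝ) * ((j:ℝ)+1)) * (sq2 n m (j+1) * ((n:ℝ)+m-1-j)) * (qpol n m).eval 0 := by
              ring
          _ = ((n.choose j:ℝ) * ((n:ℝ)-j)) * (sq2 n m j * ((m:ℝ)-j)) * (qpol n m).eval 0 := by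
              rw [key1, key3]
          _ = ((n.choose j:ℝ) * sq2 n m j * (qpol n m).eval 0) * (((n:ℝ)-j) * ((m:ℝ)-j)) := by
              ring
          _ = ((m.choose j:ℝ) * (qpol n m).eval (j:ℝ)) * (((n:ℝ)-j) * ((m:ℝ)-j)) := by rw [IH]
          _ = ((m.choose j:ℝ) * ((m:ℝ)-j)) * ((qpol n m).eval (j:ℝ) * ((n:ℝ)-j)) := by ring
          _ = ((m.choose j:ℝ) * ((m:ℝ)-j)) * ((qpol n m).eval ((j:ℝ)+1) * ((n:ℝ)+m-1-j)) := by
              rw [key4]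
          _ = (m.choose (j+1):ℝ) * (qpol n m).eval (((j+1:ℕ)):ℝ) * (((j:ℝ)+1) * ((n:ℝ)+m-1-j)) := by
              rw [← key2]; push_cast; ring

private lemma scalar_id (n : ℕ) (hn : 0 < n) (m : ℕ) (hm : 0 < m) :
    ∑ j ∈ range (n+1), (-1:ℝ)^j * (n.choose j) * sq2 n m j = 0 := by
  have hq0 : (0:ℝ) < (qpol n m).eval 0 := by
    rw [qpol_eval]
    apply Finset.prod_pos
    intro i _
    have : (0:ℝ) ≤ (i:ℝ) := Nat.cast_nonneg i
    have hn' : (1:ℝ) ≤ (n:ℝ) := by exact_mod_cast hn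
    linarith
  set N := max n m with hN
  have hS1 : (∑ j ∈ range (n+1), (-1:ℝ)^j * (n.choose j) * sq2 n m j) * (qpol n m).eval 0
      = ∑ j ∈ range (n+1), (-1:ℝ)^j * (m.choose j) * (qpol n m).eval (j:ℝ) := by
    rw [Finset.sum_mul]
    apply Finset.sum_congr rfl
    intro j _
    have := bridge n m hn hm j
    calc (-1:ℝ)^j * (n.choose j) * sq2 n m j * (qpol n m).eval 0
        = (-1:ℝ)^j * ((n.choose j:ℝ) * sq2 n m j * (qpol n m).eval 0) := by ring
      _ = (-1:ℝ)^j * ((m.choose j:ℝ) * (qpol n m).eval (j:ℝ)) := by rw [this]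
      _ = (-1:ℝ)^j * (m.choose j) * (qpol n m).eval (j:ℝ) := by ring
  have hS2 : ∑ j ∈ range (n+1), (-1:ℝ)^j * (m.choose j) * (qpol n m).eval (j:ℝ)
      = ∑ j ∈ range (N+1), (-1:ℝ)^j * (m.choose j) * (qpol n m).eval (j:ℝ) := by
    apply Finset.sum_subset
    · apply Finset.range_subset_range.2; omega
    · intro j _ hj
      simp only [Finset.mem_range, not_lt] at hj
      have := choose_qpol_zero n m hn hm j (by omega)
      calc (-1:ℝ)^j * (m.choose j) * (qpol n m).eval (j:ℝ)
          = (-1:ℝ)^j * ((m.choose j:ℝ) * (qpol n m).eval (j:ℝ)) := by ring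
        _ = 0 := by rw [this]; ring
  have hS3 : ∑ j ∈ range (m+1), (-1:ℝ)^j * (m.choose j) * (qpol n m).eval (j:ℝ)
      = ∑ j ∈ range (N+1), (-1:ℝ)^j * (m.choose j) * (qpol n m).eval (j:ℝ) := by
    apply Finset.sum_subset
    · apply Finset.range_subset_range.2; omega
    · intro j _ hj
      simp only [Finset.mem_range, not_lt] at hj
      rw [Nat.choose_eq_zero_of_lt (by omega)]
      simp
  have hFD := fd m hm (qpol n m) (qpol_deg n m hm)
  have : (∑ j ∈ range (n+1), (-1:ℝ)^j * (n.choose j) * sq2 n m j) * (qpol n m).eval 0 = 0 := by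
    rw [hS1, hS2, ← hS3, hFD]
  exact (mul_eq_zero.1 this).resolve_right (ne_of_gt hq0)


open ContinuousLinearMap

local notation "⟪" x ", " y "⟫" => @inner ℂ _ _ x y

private lemma pos_apply_eq_zero {H : Type*} [NormedAddCommGroup H] [InnerProductSpace ℂ H]
    [CompleteSpace H] {P : H →L[ℂ] H} (hP : P.IsPositive) {x : H}
    (hx : (⟪P x, x⟫).re = 0) : P x = 0 := by
  have hsymm : ∀ u v : H, ⟪P u, v⟫ = ⟪u, P v⟫ :=
    (isSelfAdjoint_iff_isSymmetric.mp hP.isSelfAdjoint)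
  have key : ∀ y : H, (⟪P x, y⟫).re = 0 := by
    intro y
    set a := (⟪P x, y⟫).re with ha
    set b := (⟪P y, y⟫).re with hb
    have hbnn : 0 ≤ b := by
      have := hP.inner_nonneg_left y
      exact (Complex.le_def.mp this).1
    have quad : ∀ t : ℝ, 0 ≤ 2*t*a + t^2*b := by
      intro t
      have h0 := hP.inner_nonneg_left (x + (t:ℂ) • y)
      have expand : ⟪P (x + (t:ℂ) • y), x + (t:ℂ) • y⟫
          = ⟪P x, x⟫ + (t:ℂ) * ⟪P x, y⟫ + (t:ℂ) * ⟪P y, x⟫ + (t:ℂ) * ((t:ℂ) * ⟪P y, y⟫) := by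
        rw [map_add, map_smul]
        rw [inner_add_left, inner_add_right, inner_add_right, inner_smul_left,
          inner_smul_right, inner_smul_left, inner_smul_right]
        simp [Complex.conj_ofReal]
        ring
      have hre : (⟪P (x + (t:ℂ) • y), x + (t:ℂ) • y⟫).re = 2*t*a + t^2*b := by
        rw [expand]
        have hyx : (⟪P y, x⟫).re = a := by
          rw [hsymm y x]
          rw [show (⟪y, P x⟫ : ℂ) = (starRingEnd ℂ) ⟪P x, y⟫ from (inner_conj_symm y (P x)).symm]
          exact Complex.conj_re _
        simp only [Complex.add_re, Complex.re_ofReal_mul]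
        rw [hx, hyx, ← ha, ← hb]
        ring
      have h0' : (0:ℝ) ≤ (⟪P (x + (t:ℂ) • y), x + (t:ℂ) • y⟫).re := (Complex.le_def.mp h0).1
      rw [hre] at h0'
      exact h0'
    by_contra hne
    replace hne : a ≠ 0 := hne
    set t0 := -a/(b+1) with ht0
    have hb1 : (0:ℝ) < b + 1 := by linarith
    have h2 : 2*t0*a + t0^2*b = (a^2/(b+1)^2) * (-(b+2)) := by
      rw [ht0]; field_simp; ring
    have hneg : (a^2/(b+1)^2) * (-(b+2)) < 0 := by
      apply mul_neg_of_pos_of_neg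
      · positivity
      · linarith
    linarith [quad t0, h2.symm ▸ hneg]
  have h1 : ⟪P x, P x⟫ = 0 := by
    have hre := key (P x)
    have him : (⟪P x, P x⟫).im = 0 := by
      have := key (Complex.I • P x)
      rw [inner_smul_right] at this
      simp [Complex.mul_re] at this
      exact inner_self_im (𝕜 := ℂ) (P x)
    exact Complex.ext hre him
  exact inner_self_eq_zero.mp h1


end Aux

set_option maxHeartbeats 2000000 in
theorem stmt_13 {H : Type*} [NormedAddCommGroup H] [InnerProductSpace ℂ H]
    [CompleteSpace H] [TopologicalSpace.SeparableSpace H]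
    (n : ℕ) (hn : 0 < n)
    (T : H →L[ℂ] H) (hhyp : IsHypercontraction T n)
    (M : Submodule ℂ H) [CompleteSpace M]
    (hinv : ∀ x ∈ M, T x ∈ M)
    (W : ℓ² →L[ℂ] ℓ²)
    (hW0 : W (lp.single 2 0 1) = 0)
    (hW : ∀ i : ℕ, W (lp.single 2 (i + 1) 1) =
      (Real.sqrt ((i + 1) / (n + i)) : ℂ) • lp.single 2 i 1)
    (U : M ≃ₗᵢ[ℂ] ℓ²)
    (hU : ∀ x : M, U ((orthogonalProjection M).comp (T.comp M.subtypeL) x) = W (U x)) :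
    (orthogonalProjection M).comp (T.comp Mᗮ.subtypeL) = 0 ∧
    (∀ x ∈ Mᗮ, T x ∈ Mᗮ) ∧
    (M ≠ ⊥ → M ≠ ⊤ →
      ∃ N : Submodule ℂ H, IsClosed (N : Set H) ∧ N ≠ ⊥ ∧ N ≠ ⊤ ∧
        (∀ x ∈ N, T x ∈ N) ∧ (∀ x ∈ N, ContinuousLinearMap.adjoint T x ∈ N)) := by
  classical
  set A : M →L[ℂ] M := (orthogonalProjection M).comp (T.comp M.subtypeL) with hAdef
  set y : ℕ → M := fun m => U.symm (lp.single 2 m 1) with hydef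
  have hUy : ∀ m, U (y m) = lp.single 2 m 1 := fun m => U.apply_symm_apply _
  have hynorm : ∀ m, ‖y m‖ = 1 := by
    intro m
    rw [hydef]
    simp only [LinearIsometryEquiv.norm_map]
    have := lp.norm_single (p := 2) (E := fun _ : ℕ => ℂ) (by norm_num) m (1:ℂ)
    simpa using this
  have hynormH : ∀ m, ‖((y m : H))‖ = 1 := fun m => hynorm m
  have hyne : ∀ m, ((y m : H)) ≠ 0 := by
    intro m h
    have := hynormH m
    rw [h, norm_zero] at this
    norm_num at this
  -- A on basis vectors
  have hA0 : A (y 0) = 0 := by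
    apply U.injective
    rw [hU (y 0), hUy 0, hW0, map_zero]
  have hAsucc : ∀ m : ℕ, A (y (m+1)) =
      ((Real.sqrt (((m:ℝ)+1)/((n:ℝ)+m)) : ℝ) : ℂ) • y m := by
    intro m
    apply U.injective
    rw [hU (y (m+1)), hUy (m+1), hW m, map_smul, hUy m]
  -- coercion of A
  have hιA : ∀ x : M, ((A x : H)) = T (x : H) := by
    intro x
    have hmem : T (x : H) ∈ M := hinv _ x.2
    have : A x = (⟨T (x:H), hmem⟩ : M) := by
      rw [hAdef]
      show orthogonalProjection M (T ((M.subtypeL x : H))) = _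
      exact orthogonalProjection_mem_subspace_eq_self (⟨T (x:H), hmem⟩ : M)
    rw [this]
  -- powers of T restricted
  have hTpow : ∀ (j : ℕ) (x : M), (T^j) ((x : H)) = (((A^j) x : M) : H) := by
    intro j
    induction j with
    | zero => intro x; simp
    | succ j IH =>
      intro x
      rw [pow_succ, pow_succ, ContinuousLinearMap.mul_apply, ContinuousLinearMap.mul_apply,
        ← hιA x, IH (A x)]
  -- powers of A on basis
  have hApow : ∀ (j m : ℕ), (A^j) (y m) = ((nuc n m j : ℝ) : ℂ) • y (m - j) := by
    intro j
    induction j with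
    | zero =>
      intro m
      rw [pow_zero, nuc_one]
      simp
    | succ j IH =>
      intro m
      rw [pow_succ, ContinuousLinearMap.mul_apply]
      cases m with
      | zero =>
        rw [hA0, map_zero, nuc_zero n 0 (j+1) (by omega)]
        simp
      | succ m =>
        rw [hAsucc m, map_smul, IH m,
          show nuc n (m+1) (j+1) = Real.sqrt (((m:ℝ)+1)/((n:ℝ)+m)) * nuc n m j from rfl,
          Nat.succ_sub_succ, smul_smul]
        push_cast
        ring_nf
  -- norms
  have hTnormsq : ∀ (j m : ℕ), ‖(T^j) ((y m : H))‖^2 = sq2 n m j := by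
    intro j m
    rw [hTpow j (y m), hApow j m]
    have : ‖((((nuc n m j : ℝ) : ℂ) • y (m-j) : M) : H)‖
        = ‖((nuc n m j : ℝ) : ℂ)‖ * ‖y (m-j)‖ := by
      rw [Submodule.coe_smul]
      exact norm_smul _ _
    rw [this, hynorm, mul_one, Complex.norm_real, Real.norm_eq_abs, sq_abs, sq2]
  -- the defect operator
  have hΔpos := hhyp n hn le_rfl
  set Δ : H →L[ℂ] H := ∑ j ∈ Finset.range (n + 1), ((-1 : ℂ) ^ j * (n.choose j : ℂ)) •
      ((ContinuousLinearMap.adjoint T) ^ j * T ^ j) with hΔdef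
  have hadjpow : ∀ j : ℕ, (ContinuousLinearMap.adjoint T)^j
      = ContinuousLinearMap.adjoint (T^j) := by
    intro j
    rw [← star_eq_adjoint, ← star_eq_adjoint, star_pow]
  have hform : ∀ m : ℕ, (@inner ℂ _ _ (Δ ((y m : H))) ((y m : H))).re
      = ∑ j ∈ Finset.range (n+1), (-1:ℝ)^j * (n.choose j) * sq2 n m j := by
    intro m
    have happ : Δ ((y m : H)) = ∑ j ∈ Finset.range (n+1),
        ((-1 : ℂ) ^ j * (n.choose j : ℂ)) •
          ((ContinuousLinearMap.adjoint (T^j)) ((T^j) ((y m : H)))) := by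
      rw [hΔdef, ContinuousLinearMap.sum_apply]
      apply Finset.sum_congr rfl
      intro j _
      rw [ContinuousLinearMap.smul_apply, ContinuousLinearMap.mul_apply, hadjpow j]
    rw [happ, sum_inner, Complex.re_sum]
    apply Finset.sum_congr rfl
    intro j _
    rw [inner_smul_left, ContinuousLinearMap.adjoint_inner_left]
    have hin : (@inner ℂ _ _ ((T^j) ((y m : H))) ((T^j) ((y m : H))))
        = ((sq2 n m j : ℝ) : ℂ) := by
      rw [inner_self_eq_norm_sq_to_K, ← hTnormsq j m]
      norm_cast
    rw [hin]
    have hc : ((-1 : ℂ) ^ j * (n.choose j : ℂ)) = ((((-1:ℝ)^j * (n.choose j : ℝ)) : ℝ) : ℂ) := by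
      push_cast; ring
    rw [hc, Complex.conj_ofReal, ← Complex.ofReal_mul, Complex.ofReal_re]
  have hΔy : ∀ m : ℕ, 0 < m → Δ ((y m : H)) = 0 := by
    intro m hm
    apply pos_apply_eq_zero hΔpos
    rw [hform m]
    exact scalar_id n hn m hm
  -- the basic equations
  have hE : ∀ m : ℕ, 0 < m →
      ∑ j ∈ Finset.range (n+1), ((-1 : ℂ) ^ j * (n.choose j : ℂ) * ((nuc n m j : ℝ) : ℂ)) •
        (((ContinuousLinearMap.adjoint T)^j) ((y (m - j) : H))) = 0 := by
    intro m hm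
    have h0 := hΔy m hm
    rw [hΔdef, ContinuousLinearMap.sum_apply] at h0
    rw [← h0]
    apply Finset.sum_congr rfl
    intro j _
    rw [ContinuousLinearMap.smul_apply, ContinuousLinearMap.mul_apply, hTpow j (y m), hApow j m]
    rw [Submodule.coe_smul, map_smul, smul_smul]
  -- positivity of nuc for small j
  have hnucpos : ∀ (m j : ℕ), j ≤ m → 0 < nuc n m j := by
    intro m j
    induction j generalizing m with
    | zero => intro _; rw [nuc_one]; norm_num
    | succ j IH =>
      intro hjm
      match m, hjm with
      | m+1, hjm =>
        show 0 < Real.sqrt (((m:ℝ)+1)/((n:ℝ)+m)) * nuc n m j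
        apply mul_pos
        · apply Real.sqrt_pos.2
          apply div_pos
          · positivity
          · have : (1:ℝ) ≤ (n:ℝ) := by exact_mod_cast hn
            have : (0:ℝ) ≤ (m:ℝ) := Nat.cast_nonneg m
            positivity
        · exact IH m (by omega)
  -- T* maps basis vectors into M
  have hTstar : ∀ m : ℕ, ∃ μ : ℂ,
      (ContinuousLinearMap.adjoint T) ((y m : H)) = μ • ((y (m+1) : H)) := by
    intro m
    induction m using Nat.strong_induction_on with
    | _ m IH =>
      have inner_claim : ∀ j : ℕ, 1 ≤ j → ∃ κ : ℂ,
          ((nuc n (m+1) j : ℝ) : ℂ) • (((ContinuousLinearMap.adjoint T)^j) ((y (m+1-j) : H)))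
            = κ • ((ContinuousLinearMap.adjoint T) ((y m : H))) := by
        intro j hj
        induction j with
        | zero => omega
        | succ j IHj =>
          rcases Nat.eq_zero_or_pos j with h0 | hj'
          · subst h0
            refine ⟨((nuc n (m+1) 1 : ℝ) : ℂ), ?_⟩
            rw [pow_one, Nat.add_sub_cancel]
          · by_cases hle : j + 1 ≤ m + 1
            · have hmj : m - j < m := by omega
              obtain ⟨μ', hμ'⟩ := IH (m - j) hmj
              obtain ⟨κ', hκ'⟩ := IHj hj'
              have hnz : ((nuc n (m+1) j : ℝ) : ℂ) ≠ 0 := by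
                have := hnucpos (m+1) j (by omega)
                exact_mod_cast ne_of_gt this
              refine ⟨((nuc n (m+1) (j+1) : ℝ) : ℂ) * μ' * κ' / ((nuc n (m+1) j : ℝ) : ℂ), ?_⟩
              have e1 : m + 1 - (j + 1) = m - j := by omega
              have e2 : m - j + 1 = m + 1 - j := by omega
              rw [e1, pow_succ, ContinuousLinearMap.mul_apply, hμ', e2, map_smul, smul_smul]
              calc (((nuc n (m+1) (j+1) : ℝ) : ℂ) * μ') •
                    ((ContinuousLinearMap.adjoint T)^j) ((y (m+1-j) : H))
                  = ((((nuc n (m+1) (j+1) : ℝ) : ℂ) * μ') / ((nuc n (m+1) j : ℝ) : ℂ)) •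
                    (((nuc n (m+1) j : ℝ) : ℂ) •
                      ((ContinuousLinearMap.adjoint T)^j) ((y (m+1-j) : H))) := by
                    rw [smul_smul, div_mul_cancel₀ _ hnz]
                _ = ((((nuc n (m+1) (j+1) : ℝ) : ℂ) * μ') / ((nuc n (m+1) j : ℝ) : ℂ)) •
                    (κ' • ((ContinuousLinearMap.adjoint T) ((y m : H)))) := by rw [hκ']
                _ = (((nuc n (m+1) (j+1) : ℝ) : ℂ) * μ' * κ' / ((nuc n (m+1) j : ℝ) : ℂ)) •
                    ((ContinuousLinearMap.adjoint T) ((y m : H))) := by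
                    rw [smul_smul]; congr 1; ring
            · refine ⟨0, ?_⟩
              rw [nuc_zero n (m+1) (j+1) (by omega)]
              simp
      choose κf hκf using inner_claim
      have hEm := hE (m+1) (Nat.succ_pos m)
      rw [Finset.sum_range_succ'] at hEm
      have hterm0 : ((-1 : ℂ) ^ 0 * (n.choose 0 : ℂ) * ((nuc n (m+1) 0 : ℝ) : ℂ)) •
          (((ContinuousLinearMap.adjoint T)^0) ((y (m+1-0) : H))) = ((y (m+1) : H)) := by
        rw [nuc_one]
        simp
      rw [hterm0] at hEm
      obtain ⟨c, hcdef⟩ : ∃ c : ℂ, c = ∑ i ∈ Finset.range n,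
        ((-1 : ℂ) ^ (i+1) * (n.choose (i+1) : ℂ)) * κf (i+1) (Nat.succ_le_succ (Nat.zero_le i)) :=
        ⟨_, rfl⟩
      have hsum : ∑ i ∈ Finset.range n,
          ((-1 : ℂ) ^ (i+1) * (n.choose (i+1) : ℂ) * ((nuc n (m+1) (i+1) : ℝ) : ℂ)) •
            (((ContinuousLinearMap.adjoint T)^(i+1)) ((y (m+1-(i+1)) : H)))
          = c • ((ContinuousLinearMap.adjoint T) ((y m : H))) := by
        rw [hcdef, Finset.sum_smul]
        apply Finset.sum_congr rfl
        intro i _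
        rw [mul_smul, hκf (i+1) (Nat.succ_le_succ (Nat.zero_le i)), smul_smul]
      rw [hsum] at hEm
      have hcne : c ≠ 0 := by
        intro hc0
        rw [hc0, zero_smul, zero_add] at hEm
        exact hyne (m+1) hEm
      refine ⟨-c⁻¹, ?_⟩
      have h9 : ((y (m+1) : H)) = (-c) • ((ContinuousLinearMap.adjoint T) ((y m : H))) := by
        rw [neg_smul]
        exact eq_neg_of_add_eq_zero_right hEm
      rw [h9, smul_smul]
      rw [show -c⁻¹ * -c = c⁻¹ * c by ring, inv_mul_cancel₀ hcne, one_smul]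
  -- T* preserves M
  have hMclosed : IsClosed (M : Set H) :=
    (completeSpace_coe_iff_isComplete.mp ‹CompleteSpace M›).isClosed
  have hTstarM : ∀ x ∈ M, (ContinuousLinearMap.adjoint T) x ∈ M := by
    intro x hx
    set f : ℓ² := U ⟨x, hx⟩ with hfdef
    have hsum1 : HasSum (fun i : ℕ => lp.single 2 i (f i)) f :=
      lp.hasSum_single (by norm_num) f
    set Φ : ℓ² →L[ℂ] H :=
      M.subtypeL.comp U.symm.toLinearIsometry.toContinuousLinearMap with hΦdef
    have hΦapp : ∀ g : ℓ², Φ g = ((U.symm g : M) : H) := fun g => rfl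
    have hΦf : Φ f = x := by
      rw [hΦapp, hfdef, U.symm_apply_apply]
    have hsum2 : HasSum (fun i : ℕ => (ContinuousLinearMap.adjoint T) (Φ (lp.single 2 i (f i))))
        ((ContinuousLinearMap.adjoint T) x) := by
      rw [← hΦf]
      exact (hsum1.mapL Φ).mapL (ContinuousLinearMap.adjoint T)
    have hmem : ∀ i : ℕ, (ContinuousLinearMap.adjoint T) (Φ (lp.single 2 i (f i))) ∈ M := by
      intro i
      have hsingle : lp.single 2 i (f i)
          = f i • lp.single (E := fun _ : ℕ => ℂ) 2 i (1:ℂ) := by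
        have h7 := lp.single_smul (𝕜 := ℂ) (E := fun _ : ℕ => ℂ) 2 i (f i) (1:ℂ)
        rw [smul_eq_mul, mul_one] at h7
        exact h7
      rw [hΦapp, hsingle, map_smul]
      obtain ⟨μ, hμ⟩ := hTstar i
      have : ((U.symm (lp.single 2 i (1:ℂ)) : M) : H) = ((y i : H)) := rfl
      rw [Submodule.coe_smul, map_smul, this, hμ]
      exact M.smul_mem _ (M.smul_mem _ (SetLike.coe_mem _))
    exact hMclosed.mem_of_tendsto hsum2
      (Filter.Eventually.of_forall fun s => M.sum_mem fun i _ => hmem i)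
  -- conclusions
  have hTMperp : ∀ x ∈ Mᗮ, T x ∈ Mᗮ := by
    intro x hx
    rw [Submodule.mem_orthogonal]
    intro u hu
    rw [← ContinuousLinearMap.adjoint_inner_left]
    exact (Submodule.mem_orthogonal M x).mp hx _ (hTstarM u hu)
  refine ⟨?_, hTMperp, ?_⟩
  · apply ContinuousLinearMap.ext
    intro x
    rw [ContinuousLinearMap.comp_apply, ContinuousLinearMap.comp_apply,
      ContinuousLinearMap.zero_apply, Submodule.subtypeL_apply]
    exact Submodule.orthogonalProjectionOnto_apply_of_mem_orthogonal
      (hTMperp _ (SetLike.coe_mem x))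
  · intro hbot htop
    exact ⟨M, hMclosed, hbot, htop, hinv, hTstarM⟩
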